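/- Let ρ > 0, h₁ > 0, h₂ > 0 and α₂ ∈ [0,1] with α₁ = 1 − α₂. Then log₂(1 + ρα₂h₂/(1 + ρα₁h₁)) ≥ ½·log₂(1 + ρh₂) if and only if α₂ ≥ (1+ρh₁)(√(1+ρh₂) − 1)/(ρh₂ + ρh₁(√(1+ρh₂) − 1)). -/
import Mathlib

theorem stmt_4 (ρ h₁ h₂ α₂ : ℝ) (hρ : 0 < ρ) (h1 : 0 < h₁) (h2 : 0 < h₂)
    (hα : α₂ ∈ Set.Icc (0:ℝ) 1) :
    Real.logb 2 (1 + ρ * α₂ * h₂ / (1 + ρ * (1 - α₂) * h₁)) ≥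
        (1/2) * Real.logb 2 (1 + ρ * h₂) ↔
      α₂ ≥ (1 + ρ * h₁) * (Real.sqrt (1 + ρ * h₂) - 1) /
        (ρ * h₂ + ρ * h₁ * (Real.sqrt (1 + ρ * h₂) - 1)) := by
  obtain ⟨hα0, hα1⟩ := hα
  set s := Real.sqrt (1 + ρ * h₂) with hs
  have hs1 : 1 ≤ s := by
    have := Real.sqrt_le_sqrt (show (1:ℝ) ≤ 1 + ρ * h₂ by nlinarith)
    simpa [hs] using this
  have hs2 : s ^ 2 = 1 + ρ * h₂ := Real.sq_sqrt (by nlinarith)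
  have hD : 0 < 1 + ρ * (1 - α₂) * h₁ := by nlinarith [mul_pos hρ h1, mul_nonneg (mul_pos hρ h1).le (sub_nonneg.mpr hα1)]
  have hden : 0 < ρ * h₂ + ρ * h₁ * (s - 1) := by nlinarith [mul_pos hρ h2, mul_nonneg (mul_pos hρ h1).le (sub_nonneg.mpr hs1)]
  have harg : 0 < 1 + ρ * α₂ * h₂ / (1 + ρ * (1 - α₂) * h₁) := by positivity
  have hlog : (1/2) * Real.logb 2 (1 + ρ * h₂) = Real.logb 2 s := by
    rw [← hs2, Real.logb_pow]; ring
  rw [ge_iff_le, hlog, Real.logb_le_logb (by norm_num) (by positivity) harg,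
    ge_iff_le, div_le_iff₀ hden]
  rw [show (1 + ρ * α₂ * h₂ / (1 + ρ * (1 - α₂) * h₁)) =
      (1 + ρ * (1 - α₂) * h₁ + ρ * α₂ * h₂) / (1 + ρ * (1 - α₂) * h₁) by
    field_simp, le_div_iff₀ hD]
  constructor <;> intro h <;> nlinarith
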